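/- There is an absolute constant C with the following property. Let v : ℝ → ℝ be twice continuously differentiable with v'(x) ≥ δ > 0 for all x and ‖v''‖_∞ ≤ M < ∞. For h > 0, set x_ν = νh, I_ν = [x_ν − h/2, x_ν + h/2), let v̄_ν := (1/h)∫_{I_ν} v(y) dy be the exact cell averages, and let P_h v(x) := v̄_ν + mm(v̄_{ν+1} − v̄_ν, v̄_ν − v̄_{ν−1})·(x − x_ν)/h for x ∈ I_ν be the piecewise-linear minmod reconstruction. Then sup_{x∈ℝ} |P_h v(x) − v(x)| ≤ C·M·h². That is, the minmod reconstruction is second-order accurate in regions of smooth monotone data. -/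

import Mathlib

open MeasureTheory intervalIntegral

/-- The minmod function `mm(z₁,z₂) = ((sgn z₁ + sgn z₂)/2)·min(|z₁|,|z₂|)`. -/
noncomputable def minmod (z₁ z₂ : ℝ) : ℝ :=
  ((Real.sign z₁ + Real.sign z₂) / 2) * min |z₁| |z₂|

/-- Exact cell average of `v` over the cell `I_ν = [νh − h/2, νh + h/2)`. -/
noncomputable def cellAvg (h : ℝ) (v : ℝ → ℝ) (ν : ℤ) : ℝ :=
  (1 / h) * ∫ y in (ν * h - h / 2)..(ν * h + h / 2), v y

/-- The piecewise-linear minmod reconstruction from the exact cell averages of `v`: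
for `x ∈ I_ν` (i.e. `ν = ⌊x/h + 1/2⌋`),
`P_h v(x) = v̄_ν + mm(v̄_{ν+1} − v̄_ν, v̄_ν − v̄_{ν−1})·(x − x_ν)/h`. -/
noncomputable def minmodRecOf (h : ℝ) (v : ℝ → ℝ) (x : ℝ) : ℝ :=
  let ν : ℤ := ⌊x / h + 1 / 2⌋
  cellAvg h v ν +
    minmod (cellAvg h v (ν + 1) - cellAvg h v ν) (cellAvg h v ν - cellAvg h v (ν - 1)) *
      (x - ν * h) / h

/-- Second-order accuracy of the minmod reconstruction for smooth monotone data: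
there is an absolute constant `C` such that for every `C²` function `v` with
`v' ≥ δ > 0` and `‖v''‖_∞ ≤ M`, and every mesh size `h > 0`,
`sup_x |P_h v(x) − v(x)| ≤ C·M·h²`. -/
lemma lip_aux (v : ℝ → ℝ) (hv : ContDiff ℝ 2 v) (M : ℝ)
    (hM : ∀ x : ℝ, |deriv (deriv v) x| ≤ M) :
    ∀ a b : ℝ, |deriv v b - deriv v a| ≤ M * |b - a| := by
  intro a b
  have hd : Differentiable ℝ (deriv v) := by
    have h2 : ContDiff ℝ (1+1) v := by norm_num at hv ⊢; exact hv
    exact (contDiff_succ_iff_deriv.mp h2).2.2.differentiable one_ne_zero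
  have := Convex.norm_image_sub_le_of_norm_deriv_le (f := deriv v) (s := Set.univ)
    (fun x _ => hd x) (fun x _ => hM x) convex_univ (Set.mem_univ a) (Set.mem_univ b)
  simpa [Real.norm_eq_abs] using this

lemma taylor_aux (v : ℝ → ℝ) (hv : ContDiff ℝ 2 v) (M : ℝ)
    (hM : ∀ x : ℝ, |deriv (deriv v) x| ≤ M) :
    ∀ c y : ℝ, |v y - v c - deriv v c * (y - c)| ≤ M * (y - c)^2 := by
  intro c y
  have hdv : Differentiable ℝ v := hv.differentiable (by norm_num)
  set g : ℝ → ℝ := fun t => v t - deriv v c * t with hg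
  have hgd : ∀ t, DifferentiableAt ℝ g t := fun t => (hdv t).sub ((differentiable_id.const_mul _) t)
  have hgderiv : ∀ t, deriv g t = deriv v t - deriv v c := by
    intro t
    rw [hg]
    have h1 : HasDerivAt (fun t : ℝ => v t - deriv v c * t) (deriv v t - deriv v c * 1) t :=
      (hdv t).hasDerivAt.sub ((hasDerivAt_id t).const_mul _)
    simpa using h1.deriv
  have bound : ∀ t ∈ Set.uIcc c y, ‖deriv g t‖ ≤ M * |y - c| := by
    intro t ht
    rw [hgderiv, Real.norm_eq_abs]
    calc |deriv v t - deriv v c| ≤ M * |t - c| := lip_aux v hv M hM c t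
    _ ≤ M * |y - c| := by
        have hM0 : 0 ≤ M := le_trans (abs_nonneg _) (hM 0)
        apply mul_le_mul_of_nonneg_left _ hM0
        rcases Set.mem_uIcc.mp ht with h | h <;> rw [abs_sub_le_iff] <;>
          constructor <;> cases abs_cases (y - c) <;> nlinarith [h.1, h.2]
  have := Convex.norm_image_sub_le_of_norm_deriv_le (f := g) (s := Set.uIcc c y)
    (fun t _ => hgd t) bound (convex_uIcc c y) Set.left_mem_uIcc Set.right_mem_uIcc
  have h2 : g y - g c = v y - v c - deriv v c * (y - c) := by rw [hg]; ring
  rw [Real.norm_eq_abs, Real.norm_eq_abs, h2] at this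
  calc |v y - v c - deriv v c * (y - c)| ≤ M * |y - c| * |y - c| := this
  _ = M * (y - c)^2 := by rw [mul_assoc, ← abs_mul, ← sq, abs_sq]

lemma avg_aux (v : ℝ → ℝ) (hv : ContDiff ℝ 2 v) (M : ℝ)
    (hM : ∀ x : ℝ, |deriv (deriv v) x| ≤ M) :
    ∀ h : ℝ, 0 < h → ∀ c : ℝ,
      |(1/h) * (∫ y in (c - h/2)..(c + h/2), v y) - v c| ≤ M * h^2 := by
  intro h hh c
  have hM0 : 0 ≤ M := le_trans (abs_nonneg _) (hM 0)
  have hL : (∫ y in (c - h/2)..(c + h/2), (v c + deriv v c * (y - c))) = h * v c := by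
    rw [intervalIntegral.integral_add intervalIntegrable_const
      (((by fun_prop : Continuous fun y : ℝ => deriv v c * (y - c))).intervalIntegrable _ _),
      intervalIntegral.integral_const, intervalIntegral.integral_const_mul,
      intervalIntegral.integral_comp_sub_right (fun y => y) c, integral_id]
    simp only [smul_eq_mul]
    ring
  have key : (∫ y in (c - h/2)..(c + h/2), (v y - (v c + deriv v c * (y - c))))
      = (∫ y in (c - h/2)..(c + h/2), v y) - h * v c := by
    rw [intervalIntegral.integral_sub (hv.continuous.intervalIntegrable _ _)
      (((by fun_prop : Continuous fun y : ℝ => v c + deriv v c * (y - c))).intervalIntegrable _ _), hL]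
  have Ibound : |∫ y in (c - h/2)..(c + h/2), (v y - (v c + deriv v c * (y - c)))|
      ≤ (M * h^2 / 4) * |(c + h/2) - (c - h/2)| := by
    rw [← Real.norm_eq_abs]
    apply intervalIntegral.norm_integral_le_of_norm_le_const
    intro y hy
    rw [Set.uIoc_of_le (by linarith)] at hy
    have h1 : |y - c| ≤ h / 2 := by
      rw [abs_sub_le_iff]; constructor <;> [linarith [hy.2]; linarith [hy.1]]
    have h2 : (y - c)^2 ≤ (h/2)^2 := by
      rw [← sq_abs]; exact pow_le_pow_left₀ (abs_nonneg _) h1 2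
    calc ‖v y - (v c + deriv v c * (y - c))‖ = |v y - v c - deriv v c * (y - c)| := by
          rw [Real.norm_eq_abs]; ring_nf
      _ ≤ M * (y - c)^2 := taylor_aux v hv M hM c y
      _ ≤ M * h^2 / 4 := by nlinarith
  have habs : |(c + h/2) - (c - h/2)| = h := by rw [abs_of_pos (by linarith)]; ring
  rw [habs, key] at Ibound
  have heq : (1/h) * (∫ y in (c - h/2)..(c + h/2), v y) - v c
      = (1/h) * ((∫ y in (c - h/2)..(c + h/2), v y) - h * v c) := by
    field_simp
  rw [heq, abs_mul, abs_of_pos (by positivity : (0:ℝ) < 1/h)]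
  calc (1/h) * |(∫ y in (c - h/2)..(c + h/2), v y) - h * v c|
      ≤ (1/h) * (M * h^2 / 4 * h) := by
        apply mul_le_mul_of_nonneg_left Ibound (by positivity)
    _ = M * h^2 / 4 := by field_simp
    _ ≤ M * h^2 := by nlinarith

noncomputable def avgC (h : ℝ) (v : ℝ → ℝ) (c : ℝ) : ℝ :=
  (1/h) * ∫ y in (c - h/2)..(c + h/2), v y

lemma avgC_close (v : ℝ → ℝ) (hv : ContDiff ℝ 2 v) (M : ℝ)
    (hM : ∀ x : ℝ, |deriv (deriv v) x| ≤ M) (h : ℝ) (hh : 0 < h) (c : ℝ) :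
    |avgC h v c - v c| ≤ M * h^2 := avg_aux v hv M hM h hh c

lemma dplus_aux (v : ℝ → ℝ) (hv : ContDiff ℝ 2 v) (M : ℝ)
    (hM : ∀ x : ℝ, |deriv (deriv v) x| ≤ M) (h : ℝ) (hh : 0 < h) (c : ℝ) :
    |avgC h v (c + h) - avgC h v c - h * deriv v c| ≤ 3 * M * h^2 := by
  have h1 := avgC_close v hv M hM h hh (c + h)
  have h2 := avgC_close v hv M hM h hh c
  have h3 := taylor_aux v hv M hM c (c + h)
  simp only [add_sub_cancel_left] at h3
  calc |avgC h v (c + h) - avgC h v c - h * deriv v c|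
      = |(avgC h v (c+h) - v (c+h)) - (avgC h v c - v c) + (v (c+h) - v c - deriv v c * h)| := by
        ring_nf
    _ ≤ |avgC h v (c+h) - v (c+h)| + |avgC h v c - v c| + |v (c+h) - v c - deriv v c * h| := by
        exact le_trans (abs_add_le _ _) (by gcongr; exact abs_sub _ _)
    _ ≤ M * h^2 + M * h^2 + M * h^2 := add_le_add (add_le_add h1 h2) h3
    _ = 3 * M * h^2 := by ring

lemma dminus_aux (v : ℝ → ℝ) (hv : ContDiff ℝ 2 v) (M : ℝ)
    (hM : ∀ x : ℝ, |deriv (deriv v) x| ≤ M) (h : ℝ) (hh : 0 < h) (c : ℝ) :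
    |avgC h v c - avgC h v (c - h) - h * deriv v c| ≤ 3 * M * h^2 := by
  have h1 := avgC_close v hv M hM h hh (c - h)
  have h2 := avgC_close v hv M hM h hh c
  have h3 := taylor_aux v hv M hM c (c - h)
  have e : c - h - c = -h := by ring
  rw [e] at h3
  have h3' : |v (c - h) - v c + deriv v c * h| ≤ M * h^2 := by
    calc |v (c - h) - v c + deriv v c * h| = |v (c-h) - v c - deriv v c * (-h)| := by ring_nf
    _ ≤ M * (-h)^2 := h3
    _ = M * h^2 := by ring_nf
  calc |avgC h v c - avgC h v (c - h) - h * deriv v c|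
      = |(avgC h v c - v c) - (avgC h v (c-h) - v (c-h)) - (v (c-h) - v c + deriv v c * h)| := by
        ring_nf
    _ ≤ |avgC h v c - v c| + |avgC h v (c-h) - v (c-h)| + |v (c-h) - v c + deriv v c * h| := by
        exact le_trans (abs_sub _ _) (by gcongr; exact abs_sub _ _)
    _ ≤ M * h^2 + M * h^2 + M * h^2 := add_le_add (add_le_add h2 h1) h3'
    _ = 3 * M * h^2 := by ring

lemma pos_aux (v : ℝ → ℝ) (hv : ContDiff ℝ 2 v) (δ : ℝ)
    (hδv : ∀ x : ℝ, δ ≤ deriv v x) (h : ℝ) (hh : 0 < h) (c : ℝ) :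
    δ * h ≤ avgC h v (c + h) - avgC h v c := by
  have hdv : Differentiable ℝ v := hv.differentiable (by norm_num)
  have hc : Continuous v := hv.continuous
  have mono : Monotone (fun t => v t - δ * t) := by
    apply monotone_of_deriv_nonneg (by fun_prop)
    intro t
    have h1 : HasDerivAt (fun t : ℝ => v t - δ * t) (deriv v t - δ * 1) t :=
      (hdv t).hasDerivAt.sub ((hasDerivAt_id t).const_mul δ)
    rw [h1.deriv]
    linarith [hδv t]
  have ptwise : ∀ y : ℝ, δ * h ≤ v (y + h) - v y := by
    intro y
    have := mono (show y ≤ y + h by linarith)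
    simp only at this
    linarith
  have shift : avgC h v (c + h) = (1/h) * ∫ y in (c - h/2)..(c + h/2), v (y + h) := by
    unfold avgC
    rw [intervalIntegral.integral_comp_add_right v h]
    congr 2 <;> ring
  have key : avgC h v (c + h) - avgC h v c
      = (1/h) * ∫ y in (c - h/2)..(c + h/2), (v (y + h) - v y) := by
    rw [shift]
    unfold avgC
    rw [intervalIntegral.integral_sub
      ((by fun_prop : Continuous fun y : ℝ => v (y + h)).intervalIntegrable _ _)
      (hv.continuous.intervalIntegrable _ _)]
    ring
  rw [key]
  have imono : (∫ y in (c - h/2)..(c + h/2), (δ * h : ℝ))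
      ≤ ∫ y in (c - h/2)..(c + h/2), (v (y + h) - v y) := by
    apply intervalIntegral.integral_mono_on (by linarith) intervalIntegrable_const
      ((by fun_prop : Continuous fun y : ℝ => v (y + h) - v y).intervalIntegrable _ _)
    intro y _
    exact ptwise y
  rw [intervalIntegral.integral_const] at imono
  have : ((c + h/2) - (c - h/2)) • (δ * h) = h * (δ * h) := by
    rw [smul_eq_mul]; ring
  rw [this] at imono
  calc δ * h = (1/h) * (h * (δ * h)) := by field_simp
    _ ≤ (1/h) * ∫ y in (c - h/2)..(c + h/2), (v (y + h) - v y) := by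
        apply mul_le_mul_of_nonneg_left imono (by positivity)

lemma minmod_pos_eq (a b : ℝ) (ha : 0 < a) (hb : 0 < b) : minmod a b = min a b := by
  unfold minmod
  rw [Real.sign_of_pos ha, Real.sign_of_pos hb, abs_of_pos ha, abs_of_pos hb]
  norm_num


theorem minmodRec_second_order_accurate :
    ∃ C : ℝ, ∀ (v : ℝ → ℝ), ContDiff ℝ 2 v →
      ∀ δ : ℝ, 0 < δ → (∀ x : ℝ, δ ≤ deriv v x) →
      ∀ M : ℝ, (∀ x : ℝ, |deriv (deriv v) x| ≤ M) →
      ∀ h : ℝ, 0 < h →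
      ∀ x : ℝ, |minmodRecOf h v x - v x| ≤ C * M * h ^ 2 := by
  refine ⟨8, ?_⟩
  intro v hv δ hδ hδv M hM h hh x
  have hM0 : 0 ≤ M := le_trans (abs_nonneg _) (hM 0)
  set ν : ℤ := ⌊x / h + 1 / 2⌋ with hν
  set c : ℝ := (ν : ℝ) * h with hc
  have hxt : x = (x / h) * h := (div_mul_cancel₀ x hh.ne').symm
  have hfl : (ν : ℝ) ≤ x / h + 1 / 2 := Int.floor_le _
  have hfu : x / h + 1 / 2 < (ν : ℝ) + 1 := Int.lt_floor_add_one _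
  have hx1 : c - h / 2 ≤ x := by rw [hc]; nlinarith
  have hx2 : x < c + h / 2 := by rw [hc]; nlinarith
  have hxc : |x - c| ≤ h / 2 := by rw [abs_sub_le_iff]; constructor <;> linarith
  have e0 : cellAvg h v ν = avgC h v c := rfl
  have e1 : cellAvg h v (ν + 1) = avgC h v (c + h) := by
    have hcast : ((ν + 1 : ℤ) : ℝ) * h = c + h := by push_cast [hc]; ring
    simp only [cellAvg, avgC, hcast]
  have e2 : cellAvg h v (ν - 1) = avgC h v (c - h) := by
    have hcast : ((ν - 1 : ℤ) : ℝ) * h = c - h := by push_cast [hc]; ring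
    simp only [cellAvg, avgC, hcast]
  set Δp : ℝ := avgC h v (c + h) - avgC h v c with hΔp
  set Δm : ℝ := avgC h v c - avgC h v (c - h) with hΔm
  have posp : 0 < Δp := lt_of_lt_of_le (by positivity) (pos_aux v hv δ hδv h hh c)
  have posm : 0 < Δm := by
    have := pos_aux v hv δ hδv h hh (c - h)
    rw [sub_add_cancel] at this
    exact lt_of_lt_of_le (by positivity) this
  have hrec : minmodRecOf h v x
      = avgC h v c + minmod Δp Δm * (x - c) / h := by
    show cellAvg h v ν + minmod (cellAvg h v (ν + 1) - cellAvg h v ν)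
        (cellAvg h v ν - cellAvg h v (ν - 1)) * (x - (ν : ℝ) * h) / h = _
    rw [e0, e1, e2, ← hc, ← hΔp, ← hΔm]
  rw [hrec, minmod_pos_eq _ _ posp posm]
  have bp := dplus_aux v hv M hM h hh c
  have bm := dminus_aux v hv M hM h hh c
  rw [← hΔp] at bp
  rw [← hΔm] at bm
  have bmin : |min Δp Δm - h * deriv v c| ≤ 3 * M * h ^ 2 := by
    rcases le_total Δp Δm with hle | hle
    · rw [min_eq_left hle]; exact bp
    · rw [min_eq_right hle]; exact bm
  have t1 : |avgC h v c - v c| ≤ M * h ^ 2 := avgC_close v hv M hM h hh c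
  have t3 : |v x - v c - deriv v c * (x - c)| ≤ M * h ^ 2 := by
    calc |v x - v c - deriv v c * (x - c)| ≤ M * (x - c) ^ 2 := taylor_aux v hv M hM c x
      _ ≤ M * h ^ 2 := by
          apply mul_le_mul_of_nonneg_left _ hM0
          calc (x - c) ^ 2 = |x - c| ^ 2 := (sq_abs _).symm
            _ ≤ (h / 2) ^ 2 := by gcongr
            _ ≤ h ^ 2 := by nlinarith
  have t2 : |(min Δp Δm - h * deriv v c) * (x - c) / h| ≤ 3 * M * h ^ 2 := by
    rw [abs_div, abs_mul, abs_of_pos hh, div_le_iff₀ hh]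
    calc |min Δp Δm - h * deriv v c| * |x - c| ≤ (3 * M * h ^ 2) * h := by
          apply mul_le_mul bmin (le_trans hxc (by linarith)) (abs_nonneg _) (by positivity)
      _ = 3 * M * h ^ 2 * h := rfl
  have decomp : avgC h v c + min Δp Δm * (x - c) / h - v x
      = (avgC h v c - v c) + (min Δp Δm - h * deriv v c) * (x - c) / h
        - (v x - v c - deriv v c * (x - c)) := by
    field_simp
    ring
  rw [decomp]
  calc |(avgC h v c - v c) + (min Δp Δm - h * deriv v c) * (x - c) / h
        - (v x - v c - deriv v c * (x - c))|
      ≤ |avgC h v c - v c| + |(min Δp Δm - h * deriv v c) * (x - c) / h|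
        + |v x - v c - deriv v c * (x - c)| :=
        le_trans (abs_sub _ _) (by gcongr; exact abs_add_le _ _)
    _ ≤ M * h ^ 2 + 3 * M * h ^ 2 + M * h ^ 2 := add_le_add (add_le_add t1 t2) t3
    _ ≤ 8 * M * h ^ 2 := by nlinarith
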